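/- (von Koch expansion of the determinant.) Let S be an M×M complex matrix and let γ ∈ ℂ. Then det(I_M − γS) = 1 + Σ_{n=1}^{M} ((−γ)^n / n!) Σ_{k₁=1}^{M} ⋯ Σ_{kₙ=1}^{M} det( S_{k_p k_q} )_{p,q=1}^{n}, where the inner sum runs over all n-tuples (k₁,…,kₙ) of indices from {1,…,M} and (S_{k_p k_q})_{p,q=1}^{n} is the n×n matrix with entries taken from S at the indicated positions. -/

import Mathlib

open Matrix Finset

/-- det of a matrix whose rows off `s` are identity rows equals the principal minor on `s`. -/
lemma det_piecewise_one {N : Type*} [DecidableEq N] [Fintype N]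
    (A : Matrix N N ℂ) (s : Finset N) :
    Matrix.det (s.piecewise A (1 : Matrix N N ℂ)) =
      Matrix.det (A.submatrix (Subtype.val : {i // i ∈ s} → N) Subtype.val) := by
  classical
  let e : {i // i ∈ s} ⊕ {i // ¬ i ∈ s} ≃ N := Equiv.sumCompl (· ∈ s)
  have h : Matrix.submatrix (s.piecewise A (1 : Matrix N N ℂ)) e e =
      Matrix.fromBlocks (A.submatrix Subtype.val Subtype.val)
        (A.submatrix Subtype.val Subtype.val) 0 1 := by
    ext i j
    cases i with
    | inl i =>
      cases j with
      | inl j => erw [Matrix.submatrix_apply]; simp [e]; erw [s.piecewise_eq_of_mem _ _ i.2]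
      | inr j => erw [Matrix.submatrix_apply]; simp [e]; erw [s.piecewise_eq_of_mem _ _ i.2]
    | inr i =>
      cases j with
      | inl j =>
        have hne : (i : N) ≠ (j : N) := fun h => i.2 (h ▸ j.2)
        erw [Matrix.submatrix_apply]; simp [e]; erw [s.piecewise_eq_of_notMem _ _ i.2]
        exact Matrix.one_apply_ne hne
      | inr j =>
        erw [Matrix.submatrix_apply]; simp [e]; erw [s.piecewise_eq_of_notMem _ _ i.2]
        simp [Matrix.one_apply, Subtype.ext_iff]
  calc Matrix.det (s.piecewise A (1 : Matrix N N ℂ))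
      = Matrix.det (Matrix.submatrix (s.piecewise A (1 : Matrix N N ℂ)) e e) :=
        (Matrix.det_submatrix_equiv_self e _).symm
    _ = _ := by rw [h, Matrix.det_fromBlocks_zero₂₁, Matrix.det_one, mul_one]

lemma det_def {N : Type*} [DecidableEq N] [Fintype N] (A : Matrix N N ℂ) :
    Matrix.detRowAlternating A = Matrix.det A := rfl

/-- The sum over all `n`-tuples of indices equals `n!` times the sum of principal minors. -/
lemma tuple_sum_eq (M n : ℕ) (S : Matrix (Fin M) (Fin M) ℂ) :
    ∑ k : Fin n → Fin M, Matrix.det (Matrix.of fun p q : Fin n => S (k p) (k q)) =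
      (n.factorial : ℂ) * ∑ s ∈ Finset.powersetCard n (Finset.univ : Finset (Fin M)),
        Matrix.det (S.submatrix (Subtype.val : {i // i ∈ s} → Fin M) Subtype.val) := by
  classical
  rw [← Finset.sum_filter_of_ne (p := fun k : Fin n → Fin M => Function.Injective k)
      (fun k _ h => by
        by_contra hinj
        apply h
        simp only [Function.Injective, not_forall] at hinj
        obtain ⟨p, q, hpq, hne⟩ := hinj
        exact Matrix.det_zero_of_row_eq hne (by ext r; simp [hpq]))]
  rw [← Finset.sum_fiberwise_of_maps_to
      (g := fun k : Fin n → Fin M => Finset.image k Finset.univ)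
      (t := Finset.powersetCard n (Finset.univ : Finset (Fin M)))
      (fun k hk => by
        rw [Finset.mem_powersetCard_univ, Finset.card_image_of_injective _
          (Finset.mem_filter.1 hk).2]
        simp)]
  rw [Finset.mul_sum]
  refine Finset.sum_congr rfl fun s hs => ?_
  have hscard : s.card = n := Finset.mem_powersetCard_univ.1 hs
  have hcardS : Fintype.card {i // i ∈ s} = n := by
    rw [Fintype.card_coe, hscard]
  -- every term in the fiber equals the principal minor det
  have hterm : ∀ k ∈ (Finset.univ.filter fun k : Fin n → Fin M =>
      Function.Injective k).filter (fun k => Finset.image k Finset.univ = s),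
      Matrix.det (Matrix.of fun p q : Fin n => S (k p) (k q)) =
        Matrix.det (S.submatrix (Subtype.val : {i // i ∈ s} → Fin M) Subtype.val) := by
    intro k hk
    simp only [Finset.mem_filter, Finset.mem_univ, true_and] at hk
    obtain ⟨hinj, himg⟩ := hk
    have hmem : ∀ p, k p ∈ s := fun p => himg ▸ Finset.mem_image_of_mem k (Finset.mem_univ p)
    have hbij : Function.Bijective (fun p : Fin n => (⟨k p, hmem p⟩ : {i // i ∈ s})) := by
      refine (Fintype.bijective_iff_injective_and_card _).2 ⟨?_, by simp [hcardS]⟩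
      intro p q hpq
      exact hinj (congrArg Subtype.val hpq)
    let e : Fin n ≃ {i // i ∈ s} := Equiv.ofBijective _ hbij
    have : (Matrix.of fun p q : Fin n => S (k p) (k q)) =
        (S.submatrix (Subtype.val : {i // i ∈ s} → Fin M) Subtype.val).submatrix e e := rfl
    rw [this, Matrix.det_submatrix_equiv_self]
  rw [Finset.sum_congr rfl hterm, Finset.sum_const, nsmul_eq_mul]
  congr 1
  -- count the fiber: it is in bijection with `Fin n ≃ s`
  have e0 : Fin n ≃ {i // i ∈ s} := (Fintype.equivFinOfCardEq hcardS).symm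
  have key : ((Finset.univ.filter fun k : Fin n → Fin M =>
      Function.Injective k).filter (fun k => Finset.image k Finset.univ = s)).card
      = n.factorial := by
    rw [← Fintype.card_coe]
    have eq1 : {k // k ∈ (Finset.univ.filter fun k : Fin n → Fin M =>
        Function.Injective k).filter (fun k => Finset.image k Finset.univ = s)}
        ≃ (Fin n ≃ {i // i ∈ s}) := by
      refine
       { toFun := fun kk =>
          Equiv.ofBijective (fun p : Fin n => (⟨kk.1 p, ?_⟩ : {i // i ∈ s})) ?_
         invFun := fun e => ⟨fun p => (e p : Fin M), ?_⟩
         left_inv := fun kk => Subtype.ext (funext fun p => rfl)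
         right_inv := fun e => Equiv.ext fun p => Subtype.ext rfl }
      · obtain ⟨k, hk⟩ := kk
        simp only [Finset.mem_filter, Finset.mem_univ, true_and] at hk
        exact hk.2 ▸ Finset.mem_image_of_mem k (Finset.mem_univ p)
      · obtain ⟨k, hk⟩ := kk
        simp only [Finset.mem_filter, Finset.mem_univ, true_and] at hk
        refine (Fintype.bijective_iff_injective_and_card _).2 ⟨?_, by simp [hcardS]⟩
        intro p q hpq
        exact hk.1 (congrArg Subtype.val hpq)
      · -- membership of the inverse function
        simp only [Finset.mem_filter, Finset.mem_univ, true_and]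
        constructor
        · intro p q hpq
          exact e.injective (Subtype.ext hpq)
        · ext x
          simp only [Finset.mem_image, Finset.mem_univ, true_and]
          constructor
          · rintro ⟨p, rfl⟩; exact (e p).2
          · intro hx; exact ⟨e.symm ⟨x, hx⟩, by simp⟩
    rw [Fintype.card_congr eq1, Fintype.card_equiv e0, Fintype.card_fin]
  rw [key]

/-- von Koch expansion of the determinant: for an `M×M` complex matrix `S` and `γ ∈ ℂ`,
`det(I_M − γS) = 1 + Σ_{n=1}^{M} ((−γ)ⁿ/n!) Σ_{k₁,…,kₙ=1}^{M} det(S_{k_p k_q})_{p,q=1}^{n}`. -/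
theorem von_koch_determinant_expansion
    (M : ℕ) (hM : 0 < M) (S : Matrix (Fin M) (Fin M) ℂ) (γ : ℂ) :
    Matrix.det (1 - γ • S) =
      1 + ∑ n ∈ Finset.Icc 1 M, ((-γ) ^ n / (n.factorial : ℂ)) *
            ∑ k : Fin n → Fin M,
              Matrix.det (Matrix.of fun p q : Fin n => S (k p) (k q)) := by
  classical
  have h1 : (1 - γ • S : Matrix (Fin M) (Fin M) ℂ) = (-γ) • S + 1 := by
    rw [sub_eq_add_neg, add_comm, ← neg_smul]
  rw [h1]
  have hd : Matrix.det ((-γ) • S + 1) =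
      ∑ s : Finset (Fin M), Matrix.det (s.piecewise ((-γ) • S)
        (1 : Matrix (Fin M) (Fin M) ℂ)) := by
    have h := (Matrix.detRowAlternating (R := ℂ) (n := Fin M)).toMultilinearMap.map_add_univ
      ((-γ) • S) (1 : Matrix (Fin M) (Fin M) ℂ)
    simp only [AlternatingMap.coe_multilinearMap, det_def] at h
    exact h
  rw [hd]
  have hp : ∀ s : Finset (Fin M),
      Matrix.det (s.piecewise ((-γ) • S) (1 : Matrix (Fin M) (Fin M) ℂ)) =
        (-γ) ^ s.card *
          Matrix.det (S.submatrix (Subtype.val : {i // i ∈ s} → Fin M) Subtype.val) := by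
    intro s
    have hpe : s.piecewise ((-γ) • S) (1 : Matrix (Fin M) (Fin M) ℂ) =
        s.piecewise (fun i => (-γ) • (s.piecewise S (1 : Matrix (Fin M) (Fin M) ℂ)) i)
          (s.piecewise S (1 : Matrix (Fin M) (Fin M) ℂ)) := by
      funext i
      by_cases h : i ∈ s
      · erw [s.piecewise_eq_of_mem _ _ h, s.piecewise_eq_of_mem _ _ h,
          s.piecewise_eq_of_mem _ _ h]
        rfl
      · erw [s.piecewise_eq_of_notMem _ _ h, s.piecewise_eq_of_notMem _ _ h,
          s.piecewise_eq_of_notMem _ _ h]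
    have hsm := (Matrix.detRowAlternating (R := ℂ) (n := Fin M)).toMultilinearMap.map_piecewise_smul
      (fun _ => -γ) (s.piecewise S (1 : Matrix (Fin M) (Fin M) ℂ)) s
    simp only [AlternatingMap.coe_multilinearMap, det_def] at hsm
    calc Matrix.det (s.piecewise ((-γ) • S) (1 : Matrix (Fin M) (Fin M) ℂ))
        = (∏ _i ∈ s, -γ) • Matrix.det (s.piecewise S (1 : Matrix (Fin M) (Fin M) ℂ)) := by
          rw [hpe]; exact hsm
      _ = (-γ) ^ s.card *
            Matrix.det (S.submatrix (Subtype.val : {i // i ∈ s} → Fin M) Subtype.val) := by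
          rw [Finset.prod_const, det_piecewise_one, smul_eq_mul]
  rw [Finset.sum_congr rfl (fun s _ => hp s)]
  have huniv : (Finset.univ : Finset (Finset (Fin M))) =
      (Finset.univ : Finset (Fin M)).powerset := (Finset.powerset_univ).symm
  rw [huniv, Finset.sum_powerset]
  have hcardu : (Finset.univ : Finset (Fin M)).card = M := by simp
  rw [hcardu]
  have hrange : Finset.range (M + 1) = insert 0 (Finset.Icc 1 M) := by
    ext x
    simp only [Finset.mem_range, Finset.mem_insert, Finset.mem_Icc]
    omega
  rw [hrange, Finset.sum_insert (by simp)]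
  congr 1
  · -- the `n = 0` term equals `1`
    rw [Finset.powersetCard_zero, Finset.sum_singleton]
    haveI : IsEmpty {i // i ∈ (∅ : Finset (Fin M))} :=
      ⟨fun x => (Finset.notMem_empty _ x.2)⟩
    simp [Matrix.det_isEmpty]
  · refine Finset.sum_congr rfl fun n hn => ?_
    rw [tuple_sum_eq M n S]
    have hfact : ((n.factorial : ℂ)) ≠ 0 := Nat.cast_ne_zero.2 n.factorial_ne_zero
    rw [← mul_assoc, div_mul_cancel₀ _ hfact, Finset.mul_sum]
    refine Finset.sum_congr rfl fun s hs => ?_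
    rw [Finset.mem_powersetCard_univ.1 hs]
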